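/- Let μ be a Radon measure on ℝ and x ∈ supp μ. Then the map t ↦ μ_{x,t} from (0,∞) to the space of Borel probability measures on [-1,1] with the weak-* topology is left continuous: for every t₀ > 0, μ_{x,t} → μ_{x,t₀} as t → t₀⁻. -/

import Mathlib

open MeasureTheory Filter Topology Set
open scoped ENNReal NNReal

noncomputable section

/-- `I = [-1,1]`. -/
abbrev I01 : Set ℝ := Set.Icc (-1 : ℝ) 1

/-- The window `x + γ·I_t = [x - γe^{-t}, x + γe^{-t}]`. -/
def window (x γ t : ℝ) : Set ℝ := Set.Icc (x - γ * Real.exp (-t)) (x + γ * Real.exp (-t))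

/-- The scenery `μ_{x,t}` as a measure on `I = [-1,1]`:
`A ↦ μ(x + e^{-t}A) / μ(x + I_t)`. -/
def sceneryMeasure (μ : Measure ℝ) (x t : ℝ) : Measure I01 :=
  (μ (window x 1 t))⁻¹ • Measure.comap (fun a : I01 => x + Real.exp (-t) * (a : ℝ)) μ

/-- The scenery `μ_{x,t}` as a Borel probability measure on `I = [-1,1]`
(with an irrelevant junk value if the normalisation fails, which does not
happen when `μ` is Radon and `x ∈ supp μ`, `t ≥ 0`). -/
def scenery (μ : Measure ℝ) (x t : ℝ) : ProbabilityMeasure I01 := by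
  classical
  exact if h : IsProbabilityMeasure (sceneryMeasure μ x t) then ⟨_, h⟩
  else ⟨Measure.dirac ⟨0, by norm_num⟩, inferInstance⟩

/-- `x` belongs to the topological support of `μ`. -/
def MemSupp (μ : Measure ℝ) (x : ℝ) : Prop := ∀ ε > 0, 0 < μ (Set.Ioo (x - ε) (x + ε))

/-- `f` is an orientation-preserving `C¹` diffeomorphism of `ℝ`. -/
def IsOPDiffeo (f : ℝ → ℝ) : Prop :=
  ContDiff ℝ 1 f ∧ Function.Bijective f ∧ ∀ y : ℝ, 0 < deriv f y

/-- The families of distributions `⟨μ⟩_{x,T}` and `⟨ν⟩_{y,T}` are asymptotic: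
`⟨μ⟩_{x,T} - ⟨ν⟩_{y,T} → 0` weak-*, i.e. for every continuous `g : M^□ → ℝ`,
`(1/T) ∫_0^T (g(μ_{x,t}) - g(ν_{y,t})) dt → 0` as `T → ∞`. -/
def DistAsymptotic (μ : Measure ℝ) (x : ℝ) (ν : Measure ℝ) (y : ℝ) : Prop :=
  ∀ g : C(ProbabilityMeasure I01, ℝ),
    Tendsto (fun T : ℝ => (1 / T) * ∫ t in Set.Ioc (0 : ℝ) T,
      (g (scenery μ x t) - g (scenery ν y t))) atTop (𝓝 0)

/-- Condition (TC) at `x`: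
`lim_{K→∞} limsup_{γ→1⁺} limsup_{T→∞} (1/T)·λ({t ∈ [0,T] : μ(x+γI_t)/μ(x+I_t) ≥ K}) = 0`. -/
def CondTC (μ : Measure ℝ) (x : ℝ) : Prop :=
  Tendsto (fun K : ℝ =>
      limsup (fun γ : ℝ =>
          limsup (fun T : ℝ =>
              (1 / T) * (volume {t : ℝ | t ∈ Set.Icc (0 : ℝ) T ∧
                ENNReal.ofReal K ≤ μ (window x γ t) / μ (window x 1 t)}).toReal)
            atTop)
        (𝓝[>] (1 : ℝ)))
    atTop (𝓝 0)

lemma range_affine (x c : ℝ) (hc : 0 < c) :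
    (Set.range fun a : I01 => x + c * (a : ℝ)) = Set.Icc (x - c) (x + c) := by
  ext y
  constructor
  · rintro ⟨⟨a, ha⟩, rfl⟩
    have h1 := ha.1; have h2 := ha.2
    constructor <;> simp only <;> nlinarith
  · intro hy
    refine ⟨⟨(y - x)/c, ?_, ?_⟩, ?_⟩
    · rw [le_div_iff₀ hc]; nlinarith [hy.1]
    · rw [div_le_iff₀ hc]; nlinarith [hy.2]
    · field_simp; ring

lemma embed_affine (x c : ℝ) (hc : 0 < c) :
    MeasurableEmbedding fun a : I01 => x + c * (a : ℝ) := by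
  have hcont : Continuous fun a : I01 => x + c * (a : ℝ) :=
    continuous_const.add (continuous_const.mul continuous_subtype_val)
  have hinj : Function.Injective fun a : I01 => x + c * (a : ℝ) := by
    intro a b h
    simp only [add_right_inj] at h
    exact Subtype.ext (mul_left_cancel₀ hc.ne' h)
  exact (hcont.isClosedEmbedding hinj).measurableEmbedding
lemma window_eq (x t : ℝ) :
    window x 1 t = Set.Icc (x - Real.exp (-t)) (x + Real.exp (-t)) := by
  simp [window]

lemma window_ne_zero (μ : Measure ℝ) (x : ℝ) (hx : MemSupp μ x) (t : ℝ) :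
    μ (window x 1 t) ≠ 0 := by
  have h := hx (Real.exp (-t)) (Real.exp_pos _)
  refine ne_of_gt (lt_of_lt_of_le h (measure_mono ?_))
  rw [window_eq]; exact Ioo_subset_Icc_self

lemma window_ne_top (μ : Measure ℝ) [IsLocallyFiniteMeasure μ] (x t : ℝ) :
    μ (window x 1 t) ≠ ⊤ := by
  rw [window_eq]; exact (isCompact_Icc.measure_lt_top).ne

lemma comap_apply_univ (μ : Measure ℝ) (x t : ℝ) :
    Measure.comap (fun a : I01 => x + Real.exp (-t) * (a : ℝ)) μ Set.univ
      = μ (window x 1 t) := by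
  rw [(embed_affine x _ (Real.exp_pos (-t))).comap_apply, Set.image_univ,
    range_affine x _ (Real.exp_pos (-t)), window_eq]

lemma scenery_prob (μ : Measure ℝ) [IsLocallyFiniteMeasure μ] (x : ℝ) (hx : MemSupp μ x)
    (t : ℝ) : IsProbabilityMeasure (sceneryMeasure μ x t) := by
  constructor
  rw [sceneryMeasure, Measure.smul_apply, comap_apply_univ, smul_eq_mul,
    ENNReal.inv_mul_cancel (window_ne_zero μ x hx t) (window_ne_top μ x t)]
lemma neg_one_le_one : (-1 : ℝ) ≤ 1 := by norm_num

def psi (φ : C(I01, ℝ)) (x t : ℝ) (y : ℝ) : ℝ :=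
  φ (Set.projIcc (-1) 1 neg_one_le_one (Real.exp t * (y - x)))

lemma psi_cont (φ : C(I01, ℝ)) (x t : ℝ) : Continuous (psi φ x t) :=
  φ.continuous.comp (continuous_projIcc.comp
    (continuous_const.mul (continuous_id.sub continuous_const)))

lemma integral_scenery (μ : Measure ℝ) (φ : C(I01, ℝ)) (x t : ℝ) :
    ∫ a, φ a ∂(sceneryMeasure μ x t)
      = (μ (window x 1 t)).toReal⁻¹ * ∫ y, (window x 1 t).indicator (psi φ x t) y ∂μ := by
  rw [sceneryMeasure, integral_smul_measure, ENNReal.toReal_inv, smul_eq_mul]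
  congr 1
  have hemb := embed_affine x _ (Real.exp_pos (-t))
  have key : ∀ a : I01, φ a = psi φ x t (x + Real.exp (-t) * (a : ℝ)) := by
    rintro ⟨a, ha⟩
    simp only [psi]
    rw [show Real.exp t * (x + Real.exp (-t) * a - x) = a by
      rw [add_sub_cancel_left, ← mul_assoc, ← Real.exp_add]; simp]
    rw [Set.projIcc_of_mem neg_one_le_one ha]
  calc ∫ a, φ a ∂(Measure.comap (fun a : I01 => x + Real.exp (-t) * (a : ℝ)) μ)
      = ∫ a, psi φ x t (x + Real.exp (-t) * (a : ℝ))
          ∂(Measure.comap (fun a : I01 => x + Real.exp (-t) * (a : ℝ)) μ) := by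
        simp_rw [← key]
    _ = ∫ y, psi φ x t y ∂(Measure.map (fun a : I01 => x + Real.exp (-t) * (a : ℝ))
          (Measure.comap (fun a : I01 => x + Real.exp (-t) * (a : ℝ)) μ)) :=
        (hemb.integral_map _).symm
    _ = ∫ y, psi φ x t y ∂(μ.restrict (window x 1 t)) := by
        rw [hemb.map_comap, range_affine x _ (Real.exp_pos (-t)), window_eq]
    _ = ∫ y, (window x 1 t).indicator (psi φ x t) y ∂μ := by
        rw [integral_indicator (by rw [window_eq]; exact measurableSet_Icc)]
lemma indicator_tendsto {β : Type*} [TopologicalSpace β] [Zero β]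
    (x t₀ : ℝ) (g : ℝ → ℝ → β)
    (hg : ∀ y, ContinuousAt (fun t => g t y) t₀) (y : ℝ) :
    Tendsto (fun t => (window x 1 t).indicator (g t) y) (𝓝[<] t₀)
      (𝓝 ((window x 1 t₀).indicator (g t₀) y)) := by
  by_cases hy : |y - x| ≤ Real.exp (-t₀)
  · have hmem : y ∈ window x 1 t₀ := by
      rw [window_eq]
      rw [abs_le] at hy
      constructor <;> linarith [hy.1, hy.2]
    rw [Set.indicator_of_mem hmem]
    have hev : ∀ᶠ t in 𝓝[<] t₀, g t y = (window x 1 t).indicator (g t) y := by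
      filter_upwards [self_mem_nhdsWithin] with t ht
      have hle : Real.exp (-t₀) ≤ Real.exp (-t) :=
        Real.exp_le_exp.2 (by simp only [Set.mem_Iio] at ht; linarith)
      refine (Set.indicator_of_mem ?_ _).symm
      rw [window_eq]
      rw [abs_le] at hy
      constructor <;> linarith [hy.1, hy.2]
    exact (((hg y).tendsto).mono_left nhdsWithin_le_nhds).congr' hev
  · push_neg at hy
    have hnm : y ∉ window x 1 t₀ := by
      rw [window_eq]
      intro h
      have : |y - x| ≤ Real.exp (-t₀) := abs_le.2 ⟨by linarith [h.1], by linarith [h.2]⟩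
      linarith
    rw [Set.indicator_of_notMem hnm]
    have hev : ∀ᶠ t in 𝓝 t₀, Real.exp (-t) < |y - x| :=
      Tendsto.eventually_lt_const hy
        ((Real.continuous_exp.comp continuous_neg).continuousAt.tendsto)
    have hev' : ∀ᶠ t in 𝓝[<] t₀, (window x 1 t).indicator (g t) y = 0 := by
      filter_upwards [nhdsWithin_le_nhds hev] with t ht
      refine Set.indicator_of_notMem ?_ _
      rw [window_eq]
      intro h
      have : |y - x| ≤ Real.exp (-t) := abs_le.2 ⟨by linarith [h.1], by linarith [h.2]⟩
      linarith
    exact tendsto_const_nhds.congr' (hev'.mono fun t h => h.symm)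
lemma window_subset (x : ℝ) {s t : ℝ} (h : s ≤ t) : window x 1 t ⊆ window x 1 s := by
  rw [window_eq, window_eq]
  have : Real.exp (-t) ≤ Real.exp (-s) := Real.exp_le_exp.2 (by linarith)
  exact Set.Icc_subset_Icc (by linarith) (by linarith)

lemma measurableSet_window (x γ t : ℝ) : MeasurableSet (window x γ t) :=
  measurableSet_Icc

lemma denom_tendsto (μ : Measure ℝ) [IsLocallyFiniteMeasure μ] (x t₀ : ℝ) :
    Tendsto (fun t => μ (window x 1 t)) (𝓝[<] t₀) (𝓝 (μ (window x 1 t₀))) := by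
  have key : ∀ t, μ (window x 1 t)
      = ∫⁻ y, (window x 1 t).indicator (1 : ℝ → ℝ≥0∞) y ∂μ := fun t =>
    (lintegral_indicator_one (measurableSet_window x 1 t)).symm
  simp_rw [key]
  refine tendsto_lintegral_filter_of_dominated_convergence
    ((window x 1 (t₀ - 1)).indicator (1 : ℝ → ℝ≥0∞)) ?_ ?_ ?_ ?_
  · filter_upwards with t
    exact (measurable_const.indicator (measurableSet_window x 1 t))
  · filter_upwards [Ioo_mem_nhdsLT (by linarith : t₀ - 1 < t₀)]
      with t ht
    filter_upwards with y
    exact Set.indicator_le_indicator_of_subset (window_subset x ht.1.le) (fun _ => zero_le) y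
  · rw [lintegral_indicator_one (measurableSet_window x 1 (t₀ - 1)), window_eq]
    exact isCompact_Icc.measure_lt_top.ne
  · filter_upwards with y
    exact indicator_tendsto x t₀ (fun _ _ => (1 : ℝ≥0∞)) (fun y => continuousAt_const) y

lemma numer_tendsto (μ : Measure ℝ) [IsLocallyFiniteMeasure μ] (φ : C(I01, ℝ)) (x t₀ : ℝ) :
    Tendsto (fun t => ∫ y, (window x 1 t).indicator (psi φ x t) y ∂μ) (𝓝[<] t₀)
      (𝓝 (∫ y, (window x 1 t₀).indicator (psi φ x t₀) y ∂μ)) := by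
  refine tendsto_integral_filter_of_dominated_convergence
    ((window x 1 (t₀ - 1)).indicator (fun _ => ‖φ‖)) ?_ ?_ ?_ ?_
  · filter_upwards with t
    exact ((psi_cont φ x t).measurable.indicator
      (measurableSet_window x 1 t)).aestronglyMeasurable
  · filter_upwards [Ioo_mem_nhdsLT (by linarith : t₀ - 1 < t₀)]
      with t ht
    filter_upwards with y
    by_cases hy : y ∈ window x 1 t
    · rw [Set.indicator_of_mem hy, Set.indicator_of_mem (window_subset x ht.1.le hy)]
      exact φ.norm_coe_le_norm _
    · rw [Set.indicator_of_notMem hy, norm_zero]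
      exact Set.indicator_apply_nonneg (fun _ => norm_nonneg _)
  · rw [integrable_indicator_iff (measurableSet_window x 1 (t₀ - 1))]
    refine integrableOn_const ?_
    rw [window_eq]; exact isCompact_Icc.measure_lt_top.ne
  · filter_upwards with y
    refine indicator_tendsto x t₀ (fun t y => psi φ x t y) (fun y => ?_) y
    exact φ.continuous.continuousAt.comp ((continuous_projIcc.comp
      ((Real.continuous_exp.mul continuous_const))).continuousAt)
lemma scenery_coe (μ : Measure ℝ) (x t : ℝ)
    (h : IsProbabilityMeasure (sceneryMeasure μ x t)) :
    (scenery μ x t : Measure I01) = sceneryMeasure μ x t := by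
  unfold scenery
  exact congrArg Subtype.val
    (dif_pos h : _ = (⟨sceneryMeasure μ x t, h⟩ : ProbabilityMeasure I01))

/-- The map `t ↦ μ_{x,t}` is left continuous on `(0,∞)` in the weak-* topology. -/
theorem scenery_left_continuous (μ : Measure ℝ) [IsLocallyFiniteMeasure μ]
    (x : ℝ) (hx : MemSupp μ x) (t₀ : ℝ) (ht₀ : 0 < t₀) (φ : C(I01, ℝ)) :
    Tendsto (fun t : ℝ => ∫ a, φ a ∂(scenery μ x t : Measure I01))
      (𝓝[<] t₀) (𝓝 (∫ a, φ a ∂(scenery μ x t₀ : Measure I01))) := by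
  have heq : ∀ t : ℝ, ∫ a, φ a ∂(scenery μ x t : Measure I01)
      = (μ (window x 1 t)).toReal⁻¹
        * ∫ y, (window x 1 t).indicator (psi φ x t) y ∂μ := by
    intro t
    rw [scenery_coe μ x t (scenery_prob μ x hx t), integral_scenery]
  have hcR : Tendsto (fun t => (μ (window x 1 t)).toReal) (𝓝[<] t₀)
      (𝓝 ((μ (window x 1 t₀)).toReal)) :=
    (ENNReal.tendsto_toReal (window_ne_top μ x t₀)).comp (denom_tendsto μ x t₀)
  have hne : (μ (window x 1 t₀)).toReal ≠ 0 :=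
    ENNReal.toReal_ne_zero.2 ⟨window_ne_zero μ x hx t₀, window_ne_top μ x t₀⟩
  simpa only [heq] using (hcR.inv₀ hne).mul (numer_tendsto μ φ x t₀)
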